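/- Let N be a weakly S-primary submodule of an R-module M and let T be a subset of R such that (0 :_M T) = 0 and Z_{(N:_R M)}(R) ∩ T = ∅. Then (N :_M T) is a weakly S-primary submodule of M. -/

import Mathlib

open Submodule

/-- `N` is a weakly `S`-primary submodule of `M`. -/
def IsWeaklySPrimary {R : Type*} [CommRing R] {M : Type*} [AddCommGroup M] [Module R M]
    (S : Set R) (N : Submodule R M) : Prop :=
  ((N.colon ⊤ : Ideal R) : Set R) ∩ S = ∅ ∧
    ∃ s ∈ S, ∀ (a : R) (m : M), a • m ≠ 0 → a • m ∈ N →
      s * a ∈ (N.colon ⊤ : Ideal R).radical ∨ s • m ∈ N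

/-- `N` is an `S`-primary submodule of `M`. -/
def IsSPrimary {R : Type*} [CommRing R] {M : Type*} [AddCommGroup M] [Module R M]
    (S : Set R) (N : Submodule R M) : Prop :=
  ((N.colon ⊤ : Ideal R) : Set R) ∩ S = ∅ ∧
    ∃ s ∈ S, ∀ (a : R) (m : M), a • m ∈ N →
      s * a ∈ (N.colon ⊤ : Ideal R).radical ∨ s • m ∈ N

/-- `N` is a weakly primary (proper) submodule of `M`. -/
def IsWeaklyPrimary {R : Type*} [CommRing R] {M : Type*} [AddCommGroup M] [Module R M]
    (N : Submodule R M) : Prop :=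
  N ≠ ⊤ ∧ ∀ (a : R) (m : M), a • m ≠ 0 → a • m ∈ N →
      a ∈ (N.colon ⊤ : Ideal R).radical ∨ m ∈ N

/-- `I` is a weakly `S`-primary ideal of `R`. -/
def IsWeaklySPrimaryIdeal {R : Type*} [CommRing R] (S : Set R) (I : Ideal R) : Prop :=
  (I : Set R) ∩ S = ∅ ∧
    ∃ s ∈ S, ∀ a b : R, a * b ≠ 0 → a * b ∈ I → s * a ∈ I.radical ∨ s * b ∈ I

theorem stmt6 {R : Type*} [CommRing R] {M : Type*} [AddCommGroup M] [Module R M]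
    (S : Set R) (hS : ∀ x ∈ S, ∀ y ∈ S, x * y ∈ S)
    (N : Submodule R M) (hN : IsWeaklySPrimary S N) (T : Set R)
    (hT0 : (⨅ t ∈ T, (⊥ : Submodule R M).comap (LinearMap.lsmul R M t)) = ⊥)
    (hZT : {r : R | ∃ u : R, u ∉ (N.colon ⊤ : Ideal R) ∧ r * u ∈ (N.colon ⊤ : Ideal R)} ∩ T = ∅) :
    IsWeaklySPrimary S (⨅ t ∈ T, N.comap (LinearMap.lsmul R M t)) := by
  classical
  obtain ⟨h1, s, hsS, hprim⟩ := hN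
  set N' : Submodule R M := ⨅ t ∈ T, N.comap (LinearMap.lsmul R M t) with hN'def
  have hmemN' : ∀ m : M, m ∈ N' ↔ ∀ t ∈ T, t • m ∈ N := by
    intro m
    simp [hN'def, Submodule.mem_iInf, Submodule.mem_comap]
  rcases Set.eq_empty_or_nonempty T with hTe | ⟨t0, ht0⟩
  · exfalso
    have htop : (⊤ : Submodule R M) = ⊥ := by
      rw [← hT0, hTe]; simp
    have hM : ∀ m : M, m = 0 := by
      intro m
      have : m ∈ (⊥ : Submodule R M) := htop ▸ Submodule.mem_top
      simpa using this
    have hsI : s ∈ ((N.colon ⊤ : Ideal R) : Set R) ∩ S := by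
      refine ⟨?_, hsS⟩
      refine Submodule.mem_colon.2 fun p _ => ?_
      rw [hM p, smul_zero]; exact N.zero_mem
    rw [h1] at hsI; exact hsI
  · have hcolon : N'.colon ⊤ = N.colon ⊤ := by
      apply le_antisymm
      · intro r hr
        by_contra hrI
        have ht0Z : t0 ∈ ({r : R | ∃ u : R, u ∉ (N.colon ⊤ : Ideal R) ∧
            r * u ∈ (N.colon ⊤ : Ideal R)} ∩ T) := by
          refine ⟨⟨r, hrI, ?_⟩, ht0⟩
          refine Submodule.mem_colon.2 fun p _ => ?_
          have hrp : r • p ∈ N' := Submodule.mem_colon.1 hr p (Submodule.mem_top (R := R))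
          rw [mul_smul]
          exact (hmemN' _).1 hrp t0 ht0
        rw [hZT] at ht0Z; exact ht0Z
      · intro r hr
        refine Submodule.mem_colon.2 fun p _ => ?_
        rw [hmemN']
        intro t ht
        rw [smul_comm]
        exact Submodule.mem_colon.1 hr _ (Submodule.mem_top (R := R))
    refine ⟨by rw [hcolon]; exact h1, s, hsS, ?_⟩
    intro a m ham hamN'
    by_cases hrad : s * a ∈ (N.colon ⊤ : Ideal R).radical
    · left; rw [hcolon]; exact hrad
    right
    have hnot : a • m ∉ (⨅ t ∈ T, (⊥ : Submodule R M).comap (LinearMap.lsmul R M t)) := by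
      rw [hT0]; simpa using ham
    obtain ⟨t1, ht1T, ht1⟩ : ∃ t ∈ T, t • (a • m) ≠ 0 := by
      by_contra h
      push_neg at h
      refine hnot ?_
      simp only [Submodule.mem_iInf, Submodule.mem_comap, Submodule.mem_bot,
        LinearMap.lsmul_apply]
      exact h
    have key : ∀ x : M, a • x ∈ N → a • x ≠ 0 → s • x ∈ N := fun x hin hne =>
      (hprim a x hne hin).resolve_left (fun h => hrad h)
    have haN : ∀ t ∈ T, a • (t • m) ∈ N := by
      intro t ht
      rw [smul_comm]
      exact (hmemN' _).1 hamN' t ht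
    have hst1 : s • (t1 • m) ∈ N := by
      refine key _ (haN t1 ht1T) ?_
      rw [smul_comm]; exact ht1
    rw [hmemN']
    intro t ht
    rw [smul_comm]
    by_cases h0 : a • (t • m) = 0
    · have hsum : s • ((t + t1) • m) ∈ N := by
        refine key _ ?_ ?_
        · rw [add_smul, smul_add, h0, zero_add]
          exact haN t1 ht1T
        · rw [add_smul, smul_add, h0, zero_add, smul_comm]
          exact ht1
      have : s • ((t + t1) • m) - s • (t1 • m) ∈ N := N.sub_mem hsum hst1
      rw [add_smul, smul_add, add_sub_cancel_right] at this
      exact this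
    · exact key _ (haN t ht) h0
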